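/- Let B = ⊕_{k≥1} B_k with B_k a direct sum of cyclic groups of order p^k, and let H be a characteristic subgroup of B. If B_k has rank at least 2 (i.e., B_k is a direct sum of at least two cyclic summands), then π_k(H) ⊆ H, where π_k : B → B_k is the projection. -/

import Mathlib

/-- Let `B = ⨁_{k≥1} B_k` with `B_k` a direct sum of cyclic groups of order
`p^k`, and `H` a characteristic subgroup of `B`. If `B_k` has rank at least `2`, then
`π_k(H) ⊆ H`. -/
theorem stmt13 (p : ℕ) (hp : p.Prime) (ι : ℕ → Type*)
    (H : AddSubgroup (Π₀ k : ℕ, (ι k →₀ ZMod (p ^ k))))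
    (hH : ∀ φ : (Π₀ k : ℕ, (ι k →₀ ZMod (p ^ k))) ≃+ (Π₀ k : ℕ, (ι k →₀ ZMod (p ^ k))),
      ∀ x ∈ H, φ x ∈ H)
    (k : ℕ) (hk : 1 ≤ k) (hrank : ∃ i j : ι k, i ≠ j) :
    ∀ h ∈ H, DFinsupp.single k (h k) ∈ H := by
  classical
  -- key: for i ≠ j and x ∈ H, single k (single j ((x k) i)) ∈ H
  have key : ∀ i j : ι k, i ≠ j → ∀ x ∈ H,
      DFinsupp.single k (Finsupp.single j ((x k) i)) ∈ H := by
    intro i j hij x hx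
    set g : (Π₀ k : ℕ, (ι k →₀ ZMod (p ^ k))) →+ (Π₀ k : ℕ, (ι k →₀ ZMod (p ^ k))) :=
      { toFun := fun y => DFinsupp.single k (Finsupp.single j ((y k) i))
        map_zero' := by simp
        map_add' := by
          intro a b
          simp [Finsupp.single_add, DFinsupp.single_add] } with hg
    have hgg : ∀ y, g (g y) = 0 := by
      intro y
      simp [hg, Finsupp.single_eq_of_ne' hij.symm]
    set φ : (Π₀ k : ℕ, (ι k →₀ ZMod (p ^ k))) ≃+ (Π₀ k : ℕ, (ι k →₀ ZMod (p ^ k))) :=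
      { toFun := fun y => y + g y
        invFun := fun y => y - g y
        left_inv := by
          intro y
          show (y + g y) - g (y + g y) = y
          rw [map_add, hgg, add_zero]
          abel
        right_inv := by
          intro y
          have hz : (y - g y) + g y = y := by abel
          have hgz : g y = g ((y - g y) + g y) := by rw [hz]
          rw [map_add, hgg, add_zero] at hgz
          show (y - g y) + g (y - g y) = y
          rw [← hgz]
          abel
        map_add' := by
          intro a b
          show (a + b) + g (a + b) = (a + g a) + (b + g b)
          rw [map_add]
          abel } with hφ
    have hmem : φ x ∈ H := hH φ x hx
    have hsub : φ x - x ∈ H := AddSubgroup.sub_mem H hmem hx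
    have heq : φ x - x = g x := by
      show (x + g x) - x = g x
      abel
    rw [heq] at hsub
    exact hsub
  intro h hh
  obtain ⟨i, j, hij⟩ := hrank
  have step : ∀ i' : ι k, DFinsupp.single k (Finsupp.single i' ((h k) i')) ∈ H := by
    intro i'
    obtain ⟨j', hj'⟩ : ∃ j' : ι k, i' ≠ j' := by
      by_cases hi : i' = i
      · exact ⟨j, hi ▸ hij⟩
      · exact ⟨i, hi⟩
    have h1 := key i' j' hj' h hh
    have h2 := key j' i' (Ne.symm hj') _ h1
    have heq : ((DFinsupp.single k (Finsupp.single j' ((h k) i')) :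
        Π₀ k : ℕ, (ι k →₀ ZMod (p ^ k))) k) j' = (h k) i' := by
      simp
    rwa [heq] at h2
  have hsum : (DFinsupp.singleAddHom (fun n => ι n →₀ ZMod (p ^ n)) k) (h k) ∈ H := by
    rw [← Finsupp.sum_single (h k), Finsupp.sum, map_sum]
    refine sum_mem fun i' _ => ?_
    exact step i'
  simpa using hsum
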